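/- Let G be a countable amenable group, and for x ∈ Λ^G (Λ finite) and finite K ⊆ G, let C_x(K|A) denote the number of distinct patterns B ∈ Λ^K occurring in x anchored at elements of A ⊆ G. Then the function f(K) = log C_x(K|A) satisfies Shearer's inequality: whenever a finite family 𝒦 of finite subsets of G is a k-cover of a finite set F (each element of F belongs to at least k members of 𝒦), then f(F) ≤ (1/k) Σ_{K∈𝒦} f(K). -/

import Mathlib

open scoped Classical

/-- `C_x(K|A)`: the number of distinct patterns over `K` occurring in `x` anchored at
elements of `A`. -/
noncomputable def patternCount {G : Type*} [Group G] {Λ : Type*} [Fintype Λ]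
    (x : G → Λ) (K : Finset G) (A : Set G) : ℕ :=
  Set.ncard {B : {g // g ∈ K} → Λ | ∃ g ∈ A, ∀ h : {g // g ∈ K}, x (h.1 * g) = B h}

open scoped NNReal
open Finset

section ShearerAux

noncomputable def projCount {γ Λ : Type*} (K : Finset γ) (S : Finset (γ → Λ)) : ℕ :=
  (S.image fun f => (fun h : {g // g ∈ K} => f h.1)).card

lemma projCount_mono_dom {γ Λ : Type*} {K K' : Finset γ} (h : K ⊆ K') (S : Finset (γ → Λ)) :
    projCount K S ≤ projCount K' S := by
  classical
  have : (S.image fun f => (fun h : {g // g ∈ K} => f h.1))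
      = (S.image fun f => (fun h : {g // g ∈ K'} => f h.1)).image
        (fun r => (fun hh : {g // g ∈ K} => r ⟨hh.1, h hh.2⟩)) := by
    rw [Finset.image_image]; rfl
  rw [projCount, this]
  exact (Finset.card_image_le).trans le_rfl

lemma projCount_mono_set {γ Λ : Type*} (K : Finset γ) {S S' : Finset (γ → Λ)} (h : S ⊆ S') :
    projCount K S ≤ projCount K S' :=
  Finset.card_le_card (Finset.image_subset_image h)

/-- If `a ∈ K`, the projections of the fibers `{f ∈ S | f a = l}` are disjoint inside
the projection of `S`. -/
lemma sum_projCount_filter_le {γ Λ : Type*} [Fintype Λ] {K : Finset γ} {a : γ} (ha : a ∈ K)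
    (S : Finset (γ → Λ)) :
    ∑ l : Λ, projCount K (S.filter fun f => f a = l) ≤ projCount K S := by
  classical
  have hdisj : ∀ l₁ ∈ (Finset.univ : Finset Λ), ∀ l₂ ∈ (Finset.univ : Finset Λ), l₁ ≠ l₂ →
      Disjoint ((S.filter fun f => f a = l₁).image fun f => (fun h : {g // g ∈ K} => f h.1))
        ((S.filter fun f => f a = l₂).image fun f => (fun h : {g // g ∈ K} => f h.1)) := by
    intro l₁ _ l₂ _ hne
    rw [Finset.disjoint_left]
    rintro r hr₁ hr₂
    obtain ⟨f₁, hf₁, rfl⟩ := Finset.mem_image.1 hr₁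
    obtain ⟨f₂, hf₂, he⟩ := Finset.mem_image.1 hr₂
    have h1 := (Finset.mem_filter.1 hf₁).2
    have h2 := (Finset.mem_filter.1 hf₂).2
    apply hne
    have := congrFun he ⟨a, ha⟩
    simp only at this
    rw [← h1, ← h2, this]
  calc ∑ l : Λ, projCount K (S.filter fun f => f a = l)
      = ((Finset.univ : Finset Λ).biUnion fun l =>
          (S.filter fun f => f a = l).image fun f => (fun h : {g // g ∈ K} => f h.1)).card := by
        rw [Finset.card_biUnion hdisj]; rfl
    _ ≤ projCount K S := by
        apply Finset.card_le_card
        intro r hr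
        obtain ⟨l, _, hr⟩ := Finset.mem_biUnion.1 hr
        obtain ⟨f, hf, rfl⟩ := Finset.mem_image.1 hr
        exact Finset.mem_image_of_mem _ (Finset.mem_filter.1 hf).1

lemma projCount_insert_le {γ Λ : Type*} [Fintype Λ] (a : γ) (F : Finset γ)
    (S : Finset (γ → Λ)) :
    projCount (insert a F) S ≤ ∑ l : Λ, projCount F (S.filter fun f => f a = l) := by
  classical
  set ψ : ({g // g ∈ insert a F} → Λ) → Λ × ({g // g ∈ F} → Λ) :=
    fun r => (r ⟨a, Finset.mem_insert_self a F⟩,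
      fun h => r ⟨h.1, Finset.mem_insert_of_mem h.2⟩) with hψ
  have hinj : Function.Injective ψ := by
    intro r₁ r₂ h
    funext g
    rcases Finset.mem_insert.1 g.2 with hg | hg
    · have := congrArg Prod.fst h
      simp only [hψ] at this
      have e1 : (⟨g.1, g.2⟩ : {g // g ∈ insert a F}) = ⟨a, Finset.mem_insert_self a F⟩ :=
        Subtype.ext hg
      calc r₁ g = r₁ ⟨a, Finset.mem_insert_self a F⟩ := by rw [← e1]
        _ = r₂ ⟨a, Finset.mem_insert_self a F⟩ := this
        _ = r₂ g := by rw [← e1]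
    · have := congrFun (congrArg Prod.snd h) ⟨g.1, hg⟩
      simpa [hψ] using this
  have hsub : (S.image fun f => (fun h : {g // g ∈ insert a F} => f h.1)).image ψ ⊆
      (Finset.univ : Finset Λ).biUnion fun l =>
        {l} ×ˢ ((S.filter fun f => f a = l).image fun f => (fun h : {g // g ∈ F} => f h.1)) := by
    intro p hp
    obtain ⟨r, hr, rfl⟩ := Finset.mem_image.1 hp
    obtain ⟨f, hf, rfl⟩ := Finset.mem_image.1 hr
    refine Finset.mem_biUnion.2 ⟨f a, Finset.mem_univ _, ?_⟩
    refine Finset.mem_product.2 ⟨Finset.mem_singleton_self _, ?_⟩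
    exact Finset.mem_image_of_mem _ (Finset.mem_filter.2 ⟨hf, rfl⟩)
  calc projCount (insert a F) S
      = ((S.image fun f => (fun h : {g // g ∈ insert a F} => f h.1)).image ψ).card :=
        (Finset.card_image_of_injective _ hinj).symm
    _ ≤ _ := Finset.card_le_card hsub
    _ ≤ ∑ l : Λ, ({l} ×ˢ ((S.filter fun f => f a = l).image
          fun f => (fun h : {g // g ∈ F} => f h.1))).card := Finset.card_biUnion_le
    _ = ∑ l : Λ, projCount F (S.filter fun f => f a = l) := by
        simp [Finset.card_product, projCount]

lemma projCount_empty_le_one {γ Λ : Type*} (S : Finset (γ → Λ)) :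
    projCount (∅ : Finset γ) S ≤ 1 := by
  classical
  haveI : Subsingleton ({g // g ∈ (∅ : Finset γ)} → Λ) :=
    ⟨fun f g => funext fun h => absurd h.2 (Finset.notMem_empty h.1)⟩
  exact Finset.card_le_one_of_subsingleton _

lemma projCount_empty_of_nonempty {γ Λ : Type*} {S : Finset (γ → Λ)} (hS : S.Nonempty) :
    1 ≤ projCount (∅ : Finset γ) S := by
  classical
  exact Finset.card_pos.2 (hS.image _)

lemma holder_gm {ι Λ : Type*} [Fintype Λ] (I : Finset ι) (hI : I.Nonempty) (c : Λ → ι → ℝ≥0) :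
    ∑ l : Λ, ∏ i ∈ I, c l i ^ ((I.card : ℝ)⁻¹) ≤
      ∏ i ∈ I, (∑ l : Λ, c l i) ^ ((I.card : ℝ)⁻¹) := by
  classical
  have hm : (I.card : ℝ) ≠ 0 := Nat.cast_ne_zero.2 (Finset.card_ne_zero_of_mem hI.choose_spec)
  have hμ : ((I.card : ℝ)⁻¹) ≠ 0 := inv_ne_zero hm
  by_cases hz : ∃ i ∈ I, (∑ l : Λ, c l i) = 0
  · obtain ⟨i₀, hi₀, hzi⟩ := hz
    have hc0 : ∀ l : Λ, c l i₀ = 0 := by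
      intro l
      have := Finset.sum_eq_zero_iff.1 hzi l (Finset.mem_univ l)
      exact this
    have : ∑ l : Λ, ∏ i ∈ I, c l i ^ ((I.card : ℝ)⁻¹) = 0 := by
      apply Finset.sum_eq_zero
      intro l _
      apply Finset.prod_eq_zero hi₀
      rw [hc0 l, NNReal.zero_rpow hμ]
    rw [this]; exact zero_le
  · push_neg at hz
    set Sf : ι → ℝ≥0 := fun i => ∑ l : Λ, c l i with hSf
    have key : ∀ l : Λ, ∏ i ∈ I, c l i ^ ((I.card : ℝ)⁻¹)
        = (∏ i ∈ I, Sf i ^ ((I.card : ℝ)⁻¹)) * ∏ i ∈ I, (c l i / Sf i) ^ ((I.card : ℝ)⁻¹) := by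
      intro l
      rw [← Finset.prod_mul_distrib]
      apply Finset.prod_congr rfl
      intro i hi
      rw [← NNReal.mul_rpow, mul_div_cancel₀ _ (hz i hi)]
    have amgm : ∀ l : Λ, ∏ i ∈ I, (c l i / Sf i) ^ ((I.card : ℝ)⁻¹)
        ≤ ∑ i ∈ I, (I.card : ℝ≥0)⁻¹ * (c l i / Sf i) := by
      intro l
      have hw : ∑ _i ∈ I, (I.card : ℝ≥0)⁻¹ = 1 := by
        rw [Finset.sum_const, nsmul_eq_mul, mul_inv_cancel₀]
        exact_mod_cast hm
      have := NNReal.geom_mean_le_arith_mean_weighted I (fun _ => (I.card : ℝ≥0)⁻¹)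
        (fun i => c l i / Sf i) hw
      simpa using this
    calc ∑ l : Λ, ∏ i ∈ I, c l i ^ ((I.card : ℝ)⁻¹)
        = (∏ i ∈ I, Sf i ^ ((I.card : ℝ)⁻¹)) *
            ∑ l : Λ, ∏ i ∈ I, (c l i / Sf i) ^ ((I.card : ℝ)⁻¹) := by
          rw [Finset.mul_sum]; exact Finset.sum_congr rfl fun l _ => key l
      _ ≤ (∏ i ∈ I, Sf i ^ ((I.card : ℝ)⁻¹)) *
            ∑ l : Λ, ∑ i ∈ I, (I.card : ℝ≥0)⁻¹ * (c l i / Sf i) := by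
          exact mul_le_mul_right (Finset.sum_le_sum fun l _ => amgm l) _
      _ = ∏ i ∈ I, Sf i ^ ((I.card : ℝ)⁻¹) := by
          rw [Finset.sum_comm]
          have : ∀ i ∈ I, ∑ l : Λ, (I.card : ℝ≥0)⁻¹ * (c l i / Sf i)
              = (I.card : ℝ≥0)⁻¹ := by
            intro i hi
            rw [← Finset.mul_sum, ← Finset.sum_div, div_self (hz i hi), mul_one]
          rw [Finset.sum_congr rfl this, Finset.sum_const, nsmul_eq_mul,
            mul_inv_cancel₀ (by exact_mod_cast hm), mul_one]

set_option maxHeartbeats 1000000 in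
lemma shearer_core {γ Λ ι : Type*} [Fintype Λ] [Fintype ι] (k : ℕ) (hk : 0 < k)
    (F : Finset γ) : ∀ 𝒦 : ι → Finset γ,
    (∀ g ∈ F, k ≤ (Finset.univ.filter fun i => g ∈ 𝒦 i).card) →
    ∀ S : Finset (γ → Λ),
    (projCount F S : ℝ≥0) ≤ ∏ i, (projCount (𝒦 i ∩ F) S : ℝ≥0) ^ ((k : ℝ)⁻¹) := by
  classical
  induction F using Finset.induction_on with
  | empty =>
    intro 𝒦 _ S
    simp only [Finset.inter_empty]
    rcases S.eq_empty_or_nonempty with rfl | hS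
    · have : projCount (∅ : Finset γ) (∅ : Finset (γ → Λ)) = 0 := by
        simp [projCount]
      rw [this]; simp
    · have h1 : projCount (∅ : Finset γ) S = 1 :=
        le_antisymm (projCount_empty_le_one S) (projCount_empty_of_nonempty hS)
      rw [h1]
      simp
  | @insert a F' haF IH =>
    intro 𝒦 hcov S
    set κ : ℝ := (k : ℝ)⁻¹ with hκdef
    set I : Finset ι := Finset.univ.filter fun i => a ∈ 𝒦 i with hI
    have hkm : k ≤ I.card := hcov a (Finset.mem_insert_self a F')
    have hIne : I.Nonempty := Finset.card_pos.1 (lt_of_lt_of_le hk hkm)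
    set μ : ℝ := ((I.card : ℝ))⁻¹ with hμdef
    have hkpos : (0:ℝ) < k := by exact_mod_cast hk
    have hmpos : (0:ℝ) < I.card := by exact_mod_cast lt_of_lt_of_le hk hkm
    have hκpos : 0 < κ := by positivity
    have hμpos : 0 < μ := by positivity
    have hμκ : μ ≤ κ := by
      apply inv_anti₀ hkpos
      exact_mod_cast hkm
    have hκμ : 0 ≤ κ - μ := sub_nonneg.2 hμκ
    set Sl : Λ → Finset (γ → Λ) := fun l => S.filter fun f => f a = l with hSl
    set q : ι → Λ → ℕ := fun i l => projCount (𝒦 i ∩ F') (Sl l) with hq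
    set p : ι → ℕ := fun i => projCount (𝒦 i ∩ insert a F') S with hp
    have hqp : ∀ i l, (q i l : ℝ≥0) ≤ (p i : ℝ≥0) := by
      intro i l
      have h1 : q i l ≤ projCount (𝒦 i ∩ insert a F') (Sl l) :=
        projCount_mono_dom (Finset.inter_subset_inter (le_refl (𝒦 i)) (Finset.subset_insert a F')) _
      have h2 : projCount (𝒦 i ∩ insert a F') (Sl l) ≤ p i :=
        projCount_mono_set _ (Finset.filter_subset _ _)
      exact_mod_cast h1.trans h2
    have hsum : ∀ i ∈ I, ∑ l : Λ, (q i l : ℝ≥0) ≤ (p i : ℝ≥0) := by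
      intro i hi
      have hai : a ∈ 𝒦 i := (Finset.mem_filter.1 hi).2
      have haK : a ∈ 𝒦 i ∩ insert a F' :=
        Finset.mem_inter.2 ⟨hai, Finset.mem_insert_self a F'⟩
      have h1 : ∀ l, q i l ≤ projCount (𝒦 i ∩ insert a F') (Sl l) := fun l =>
        projCount_mono_dom (Finset.inter_subset_inter (le_refl (𝒦 i)) (Finset.subset_insert a F')) _
      have h2 : ∑ l : Λ, projCount (𝒦 i ∩ insert a F') (Sl l) ≤ p i :=
        sum_projCount_filter_le haK S
      have := (Finset.sum_le_sum fun l _ => h1 l).trans h2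
      exact_mod_cast this
    -- main chain
    have step1 : (projCount (insert a F') S : ℝ≥0) ≤ ∑ l : Λ, (projCount F' (Sl l) : ℝ≥0) := by
      exact_mod_cast projCount_insert_le a F' S
    have step2 : ∀ l : Λ, (projCount F' (Sl l) : ℝ≥0) ≤ ∏ i, (q i l : ℝ≥0) ^ κ := by
      intro l
      exact IH 𝒦 (fun g hg => hcov g (Finset.mem_insert_of_mem hg)) (Sl l)
    have hκne : κ ≠ 0 := ne_of_gt hκpos
    have hsplitexp : ∀ z : ℝ≥0, z ^ κ = z ^ (κ - μ) * z ^ μ := by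
      intro z
      rw [← NNReal.rpow_add' (by rw [sub_add_cancel]; exact hκne) z, sub_add_cancel]
    have step3 : ∀ l : Λ, ∏ i, (q i l : ℝ≥0) ^ κ ≤
        ((∏ i ∈ I, (p i : ℝ≥0) ^ (κ - μ)) * ∏ i ∈ Iᶜ, (p i : ℝ≥0) ^ κ) *
          ∏ i ∈ I, (q i l : ℝ≥0) ^ μ := by
      intro l
      have hsplit : ∏ i, (q i l : ℝ≥0) ^ κ
          = (∏ i ∈ I, (q i l : ℝ≥0) ^ κ) * ∏ i ∈ Iᶜ, (q i l : ℝ≥0) ^ κ :=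
        (Finset.prod_mul_prod_compl I _).symm
      rw [hsplit]
      have h1 : ∏ i ∈ Iᶜ, (q i l : ℝ≥0) ^ κ ≤ ∏ i ∈ Iᶜ, (p i : ℝ≥0) ^ κ :=
        Finset.prod_le_prod' fun i _ => NNReal.rpow_le_rpow (hqp i l) (le_of_lt hκpos)
      have h2 : ∏ i ∈ I, (q i l : ℝ≥0) ^ κ
          ≤ (∏ i ∈ I, (p i : ℝ≥0) ^ (κ - μ)) * ∏ i ∈ I, (q i l : ℝ≥0) ^ μ := by
        rw [← Finset.prod_mul_distrib]
        apply Finset.prod_le_prod'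
        intro i _
        rw [hsplitexp ((q i l : ℝ≥0))]
        exact mul_le_mul_left (NNReal.rpow_le_rpow (hqp i l) hκμ) _
      calc (∏ i ∈ I, (q i l : ℝ≥0) ^ κ) * ∏ i ∈ Iᶜ, (q i l : ℝ≥0) ^ κ
          ≤ ((∏ i ∈ I, (p i : ℝ≥0) ^ (κ - μ)) * ∏ i ∈ I, (q i l : ℝ≥0) ^ μ) *
              ∏ i ∈ Iᶜ, (p i : ℝ≥0) ^ κ := mul_le_mul' h2 h1
        _ = _ := by ring
    have step4 : ∑ l : Λ, ∏ i ∈ I, (q i l : ℝ≥0) ^ μ ≤ ∏ i ∈ I, (p i : ℝ≥0) ^ μ := by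
      calc ∑ l : Λ, ∏ i ∈ I, (q i l : ℝ≥0) ^ μ
          ≤ ∏ i ∈ I, (∑ l : Λ, (q i l : ℝ≥0)) ^ μ := holder_gm I hIne _
        _ ≤ ∏ i ∈ I, (p i : ℝ≥0) ^ μ :=
            Finset.prod_le_prod' fun i hi =>
              NNReal.rpow_le_rpow (hsum i hi) (le_of_lt hμpos)
    calc (projCount (insert a F') S : ℝ≥0)
        ≤ ∑ l : Λ, (projCount F' (Sl l) : ℝ≥0) := step1
      _ ≤ ∑ l : Λ, ∏ i, (q i l : ℝ≥0) ^ κ := Finset.sum_le_sum fun l _ => step2 l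
      _ ≤ ∑ l : Λ, ((∏ i ∈ I, (p i : ℝ≥0) ^ (κ - μ)) * ∏ i ∈ Iᶜ, (p i : ℝ≥0) ^ κ) *
            ∏ i ∈ I, (q i l : ℝ≥0) ^ μ := Finset.sum_le_sum fun l _ => step3 l
      _ = ((∏ i ∈ I, (p i : ℝ≥0) ^ (κ - μ)) * ∏ i ∈ Iᶜ, (p i : ℝ≥0) ^ κ) *
            ∑ l : Λ, ∏ i ∈ I, (q i l : ℝ≥0) ^ μ := by rw [← Finset.mul_sum]
      _ ≤ ((∏ i ∈ I, (p i : ℝ≥0) ^ (κ - μ)) * ∏ i ∈ Iᶜ, (p i : ℝ≥0) ^ κ) *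
            ∏ i ∈ I, (p i : ℝ≥0) ^ μ := mul_le_mul_right step4 _
      _ = ∏ i, (p i : ℝ≥0) ^ κ := by
          rw [← Finset.prod_mul_prod_compl I fun i => (p i : ℝ≥0) ^ κ]
          rw [mul_right_comm, ← Finset.prod_mul_distrib]
          congr 1
          apply Finset.prod_congr rfl
          intro i _
          rw [← hsplitexp]

end ShearerAux

/-- The function `K ↦ log C_x(K|A)` satisfies Shearer's inequality:
if the family `(𝒦 i)` is a `k`-cover of `F`, then
`log C_x(F|A) ≤ (1/k) Σᵢ log C_x(𝒦ᵢ|A)`. -/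
theorem stmt13 {G : Type*} [Group G] [Countable G] {Λ : Type*} [Fintype Λ]
    (x : G → Λ) (A : Set G)
    {ι : Type*} [Fintype ι] (𝒦 : ι → Finset G) (F : Finset G)
    (k : ℕ) (hk : 0 < k)
    (hcover : ∀ g ∈ F, k ≤ (Finset.univ.filter fun i => g ∈ 𝒦 i).card) :
    Real.log (patternCount x F A) ≤
      (1 / (k : ℝ)) * ∑ i, Real.log (patternCount x (𝒦 i) A) := by
  classical
  set E : Finset G := F ∪ Finset.univ.biUnion 𝒦 with hE
  have hFE : F ⊆ E := Finset.subset_union_left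
  have hKE : ∀ i, 𝒦 i ⊆ E := fun i =>
    (Finset.subset_biUnion_of_mem 𝒦 (Finset.mem_univ i)).trans Finset.subset_union_right
  set y : G → (G → Λ) := fun g h => if h ∈ E then x (h * g) else x 1 with hy
  have hTfin : (y '' A).Finite := by
    apply Set.Finite.of_finite_image (f := fun f => (fun h : {g // g ∈ E} => f h.1))
    · exact Set.toFinite _
    · intro f₁ h₁ f₂ h₂ hf
      obtain ⟨g₁, _, rfl⟩ := h₁
      obtain ⟨g₂, _, rfl⟩ := h₂
      funext h
      by_cases hh : h ∈ E
      · exact congrFun hf ⟨h, hh⟩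
      · simp only [hy, if_neg hh]
  set S : Finset (G → Λ) := hTfin.toFinset with hS
  have hmemS : ∀ f, f ∈ S ↔ ∃ g ∈ A, y g = f := by
    intro f
    rw [hS, Set.Finite.mem_toFinset]
    constructor
    · rintro ⟨g, hg, rfl⟩; exact ⟨g, hg, rfl⟩
    · rintro ⟨g, hg, rfl⟩; exact ⟨g, hg, rfl⟩
  have key : ∀ K : Finset G, K ⊆ E → projCount K S = patternCount x K A := by
    intro K hKsub
    have hset : ((S.image fun f => (fun h : {g // g ∈ K} => f h.1)) : Set ({g // g ∈ K} → Λ))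
        = {B : {g // g ∈ K} → Λ | ∃ g ∈ A, ∀ h : {g // g ∈ K}, x (h.1 * g) = B h} := by
      ext B
      simp only [Finset.coe_image, Set.mem_image, Finset.mem_coe, Set.mem_setOf_eq]
      constructor
      · rintro ⟨f, hf, rfl⟩
        obtain ⟨g, hg, rfl⟩ := (hmemS f).1 hf
        exact ⟨g, hg, fun h => by simp only [hy, if_pos (hKsub h.2)]⟩
      · rintro ⟨g, hg, hB⟩
        refine ⟨y g, (hmemS _).2 ⟨g, hg, rfl⟩, ?_⟩
        funext h
        rw [← hB h]
        simp only [hy, if_pos (hKsub h.2)]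
    rw [projCount, patternCount, ← hset, Set.ncard_coe_finset]
  have hcore := shearer_core (Λ := Λ) k hk F 𝒦 hcover S
  rw [key F hFE] at hcore
  have hbound : ∀ i, (projCount (𝒦 i ∩ F) S : ℝ≥0) ≤ (patternCount x (𝒦 i) A : ℝ≥0) := by
    intro i
    rw [← key (𝒦 i) (hKE i)]
    exact_mod_cast projCount_mono_dom Finset.inter_subset_left S
  have hmain : (patternCount x F A : ℝ≥0) ≤
      ∏ i, (patternCount x (𝒦 i) A : ℝ≥0) ^ ((k : ℝ)⁻¹) :=
    hcore.trans (Finset.prod_le_prod' fun i _ =>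
      NNReal.rpow_le_rpow (hbound i) (by positivity))
  rcases Nat.eq_zero_or_pos (patternCount x F A) with h0 | hpos
  · rw [h0]
    simp only [Nat.cast_zero, Real.log_zero]
    apply mul_nonneg (by positivity)
    apply Finset.sum_nonneg
    intro i _
    rcases Nat.eq_zero_or_pos (patternCount x (𝒦 i) A) with h | h
    · simp [h]
    · exact Real.log_nonneg (by exact_mod_cast h)
  · have hcne : (patternCount x F A : ℝ≥0) ≠ 0 := by
      simp only [ne_eq, Nat.cast_eq_zero]; omega
    have hprodne : (∏ i, (patternCount x (𝒦 i) A : ℝ≥0) ^ ((k : ℝ)⁻¹)) ≠ 0 := by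
      intro h
      rw [h] at hmain
      exact hcne (le_antisymm hmain zero_le)
    have hfacpos : ∀ i, 0 < patternCount x (𝒦 i) A := by
      intro i
      by_contra h
      push_neg at h
      interval_cases h' : patternCount x (𝒦 i) A
      apply hprodne
      apply Finset.prod_eq_zero (Finset.mem_univ i)
      rw [h']
      simp [NNReal.zero_rpow (by positivity : ((k:ℝ)⁻¹) ≠ 0)]
    have hmainR : (patternCount x F A : ℝ) ≤
        ∏ i, (patternCount x (𝒦 i) A : ℝ) ^ ((k : ℝ)⁻¹) := by
      have := NNReal.coe_le_coe.2 hmain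
      push_cast at this
      exact this
    have hposR : (0:ℝ) < (patternCount x F A : ℝ) := by exact_mod_cast hpos
    calc Real.log (patternCount x F A)
        ≤ Real.log (∏ i, (patternCount x (𝒦 i) A : ℝ) ^ ((k : ℝ)⁻¹)) :=
          Real.log_le_log hposR hmainR
      _ = ∑ i, Real.log ((patternCount x (𝒦 i) A : ℝ) ^ ((k : ℝ)⁻¹)) := by
          apply Real.log_prod
          intro i _
          apply ne_of_gt
          apply Real.rpow_pos_of_pos
          exact_mod_cast hfacpos i
      _ = ∑ i, (k : ℝ)⁻¹ * Real.log (patternCount x (𝒦 i) A) := by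
          apply Finset.sum_congr rfl
          intro i _
          rw [Real.log_rpow (by exact_mod_cast hfacpos i)]
      _ = (1 / (k : ℝ)) * ∑ i, Real.log (patternCount x (𝒦 i) A) := by
          rw [Finset.mul_sum]
          simp [one_div]
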